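/- Let (M,ρ,μ) be a metric measure space with the approximate midpoint property with constants R₀ ≥ 0 and β ∈ (1/2,1), locally doubling, and let r ∈ (1,∞], R₀/(1−β) < c < b. Then a function f ∈ L¹(μ) belongs to the atomic Hardy space H_c^{1,r}(μ) if and only if it belongs to H_b^{1,r}(μ), and there is a constant C (depending only on M, b, c) with ‖f‖_{H_b^{1,r}} ≤ ‖f‖_{H_c^{1,r}} ≤ C·‖f‖_{H_b^{1,r}}. -/

import Mathlib

open MeasureTheory Metric Set ENNReal

variable {M : Type*} [MetricSpace M] [MeasurableSpace M]

/-- A `(1,r)`-atom at scale `b`: a function supported in a ball `B` of radius at most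
`b`, with vanishing integral and `‖a‖_{L^r} ≤ μ(B)^{1/r}·μ(B)⁻¹` (for `r = ∞` this is
`‖a‖_∞ ≤ μ(B)⁻¹`). -/
def IsAtomOn (μ : MeasureTheory.Measure M) (r : ℝ≥0∞) (b : ℝ) (a : M → ℝ) : Prop :=
  ∃ (x : M) (s : ℝ), 0 < s ∧ s ≤ b ∧
    (∀ y, y ∉ Metric.ball x s → a y = 0) ∧
    MeasureTheory.Integrable a μ ∧
    (∫ y, a y ∂μ) = 0 ∧
    MeasureTheory.eLpNorm a r μ ≤
      μ (Metric.ball x s) ^ ((1 / r).toReal) * (μ (Metric.ball x s))⁻¹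

/-- Membership in the atomic Hardy space `H_b^{1,r}(μ)`: `f = Σ λ_k a_k` with `(1,r)`-atoms
`a_k` supported in balls of radius ≤ `b`, `Σ|λ_k| < ∞`, the series converging in `L¹(μ)`. -/
def InHardy (μ : MeasureTheory.Measure M) (r : ℝ≥0∞) (b : ℝ) (f : M → ℝ) : Prop :=
  ∃ (c : ℕ → ℝ) (a : ℕ → M → ℝ),
    (∀ n, IsAtomOn μ r b (a n)) ∧ Summable (fun n => |c n|) ∧
    Filter.Tendsto
      (fun N => ∫ x, |f x - ∑ n ∈ Finset.range N, c n * a n x| ∂μ)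
      Filter.atTop (nhds 0)

/-- The atomic Hardy norm `‖f‖_{H_b^{1,r}(μ)}`: the infimum of `Σ|λ_k|` over all atomic
decompositions of `f`. -/
noncomputable def hardyNorm (μ : MeasureTheory.Measure M) (r : ℝ≥0∞) (b : ℝ)
    (f : M → ℝ) : ℝ :=
  sInf {t : ℝ | ∃ (c : ℕ → ℝ) (a : ℕ → M → ℝ),
    (∀ n, IsAtomOn μ r b (a n)) ∧ Summable (fun n => |c n|) ∧
    Filter.Tendsto
      (fun N => ∫ x, |f x - ∑ n ∈ Finset.range N, c n * a n x| ∂μ)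
      Filter.atTop (nhds 0) ∧
    (∑' n, |c n|) = t}


namespace HSSI

lemma exp_eq (r : ℝ≥0∞) : (1/r).toReal = 1/r.toReal := by
  simp [one_div, ENNReal.toReal_inv]

lemma list_sum_map' {α β : Type*} [AddCommMonoid β] (f : α → β) (L : List α) :
    (L.map f).sum = ∑ i : Fin L.length, f (L.get i) := by
  induction L with
  | nil => simp
  | cons a L ih =>
    rw [List.map_cons, List.sum_cons, ih]
    show _ = ∑ i : Fin (L.length + 1), f ((a :: L).get i)
    rw [Fin.sum_univ_succ]
    rfl

variable [BorelSpace M] (μ : MeasureTheory.Measure M)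

lemma doubling_chain (D T : ℝ)
    (hD : ∀ (x : M) (s : ℝ), 0 < s → s ≤ T → μ (ball x (2*s)) ≤ ENNReal.ofReal D * μ (ball x s)) :
    ∀ (n : ℕ) (x : M) (s : ℝ), 0 < s → (∀ k < n, 2^k * s ≤ T) →
      μ (ball x (2^n * s)) ≤ (ENNReal.ofReal D)^n * μ (ball x s) := by
  intro n
  induction n with
  | zero => intro x s hs _; simp
  | succ n ih =>
    intro x s hs hk
    have h1 : (2:ℝ)^(n+1) * s = 2 * (2^n * s) := by ring
    have h2 : (0:ℝ) < 2^n * s := by positivity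
    calc μ (ball x (2^(n+1)*s)) = μ (ball x (2*(2^n*s))) := by rw [h1]
      _ ≤ ENNReal.ofReal D * μ (ball x (2^n*s)) := hD x _ h2 (hk n (Nat.lt_succ_self n))
      _ ≤ ENNReal.ofReal D * ((ENNReal.ofReal D)^n * μ (ball x s)) := by
          gcongr
          exact ih x s hs (fun k hk' => hk k (Nat.lt_succ_of_lt hk'))
      _ = (ENNReal.ofReal D)^(n+1) * μ (ball x s) := by ring

lemma ball_pos (hpos : μ Set.univ ≠ 0)
    (hLD : ∀ b : ℝ, 0 < b → ∃ D : ℝ, ∀ (x : M) (s : ℝ), 0 < s → s ≤ b →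
      μ (ball x (2 * s)) ≤ ENNReal.ofReal D * μ (ball x s)) :
    ∀ (x : M) (s : ℝ), 0 < s → 0 < μ (ball x s) := by
  intro x s hs
  by_contra h
  push_neg at h
  replace h : μ (ball x s) = 0 := le_antisymm h (zero_le)
  have hall : ∀ R : ℝ, μ (ball x R) = 0 := by
    intro R
    obtain ⟨n, hn⟩ := pow_unbounded_of_one_lt (R / s) (by norm_num : (1:ℝ) < 2)
    have hRn : R ≤ 2^n * s := by
      rw [div_lt_iff₀ hs] at hn
      linarith
    obtain ⟨D, hD⟩ := hLD (2^n * s) (by positivity)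
    have hch := doubling_chain μ D (2^n*s) hD n x s hs (fun k hk => by
      have : (2:ℝ)^k ≤ 2^n := by
        apply pow_le_pow_right₀ (by norm_num) hk.le
      nlinarith)
    rw [h, mul_zero] at hch
    have h0 : μ (ball x (2^n * s)) = 0 := le_antisymm hch (zero_le)
    exact le_antisymm (le_trans (measure_mono (ball_subset_ball hRn)) h0.le) (zero_le)
  apply hpos
  have hsub : (Set.univ : Set M) ⊆ ⋃ n : ℕ, ball x n := by
    intro y _
    obtain ⟨n, hn⟩ := exists_nat_gt (dist y x)
    exact Set.mem_iUnion.2 ⟨n, mem_ball.2 hn⟩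
  have : μ (⋃ n : ℕ, ball x (n:ℝ)) = 0 := measure_iUnion_null (fun n => hall n)
  exact le_antisymm (le_trans (measure_mono hsub) this.le) (zero_le)


variable {μ}

/-- `h` is a combination of at most `N` `(1,r)`-atoms at scale `c` with coefficient sum `≤ K`. -/
def Good (μ : MeasureTheory.Measure M) (r : ℝ≥0∞) (c : ℝ) (K : ℝ) (N : ℕ) (h : M → ℝ) : Prop :=
  ∃ L : List (ℝ × (M → ℝ)), L.length ≤ N ∧ (∀ p ∈ L, IsAtomOn μ r c p.2) ∧
    ((L.map fun p => |p.1|).sum ≤ K) ∧ ∀ x, h x = (L.map fun p => p.1 * p.2 x).sum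

lemma good_zero {r : ℝ≥0∞} {c K : ℝ} {N : ℕ} (hK : 0 ≤ K) :
    Good μ r c K N (fun _ => 0) :=
  ⟨[], by simp, by simp, by simpa, by simp⟩

lemma good_congr {r : ℝ≥0∞} {c K : ℝ} {N : ℕ} {h₁ h₂ : M → ℝ} (he : ∀ x, h₁ x = h₂ x)
    (hg : Good μ r c K N h₁) : Good μ r c K N h₂ := by
  obtain ⟨L, h1, h2, h3, h4⟩ := hg
  exact ⟨L, h1, h2, h3, fun x => (he x) ▸ h4 x⟩

lemma good_mono {r : ℝ≥0∞} {c K K' : ℝ} {N N' : ℕ} {h : M → ℝ} (hK : K ≤ K') (hN : N ≤ N')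
    (hg : Good μ r c K N h) : Good μ r c K' N' h := by
  obtain ⟨L, h1, h2, h3, h4⟩ := hg
  exact ⟨L, le_trans h1 hN, h2, le_trans h3 hK, h4⟩

lemma good_add {r : ℝ≥0∞} {c K₁ K₂ : ℝ} {N₁ N₂ : ℕ} {h₁ h₂ : M → ℝ}
    (hg₁ : Good μ r c K₁ N₁ h₁) (hg₂ : Good μ r c K₂ N₂ h₂) :
    Good μ r c (K₁ + K₂) (N₁ + N₂) (fun x => h₁ x + h₂ x) := by
  obtain ⟨L₁, a1, a2, a3, a4⟩ := hg₁
  obtain ⟨L₂, b1, b2, b3, b4⟩ := hg₂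
  refine ⟨L₁ ++ L₂, ?_, ?_, ?_, ?_⟩
  · simp only [List.length_append]; omega
  · intro p hp
    rcases List.mem_append.1 hp with h | h
    · exact a2 p h
    · exact b2 p h
  · rw [List.map_append, List.sum_append]; exact add_le_add a3 b3
  · intro x
    show h₁ x + h₂ x = _
    rw [List.map_append, List.sum_append, a4 x, b4 x]

lemma good_smul {r : ℝ≥0∞} {c K : ℝ} {N : ℕ} {h : M → ℝ} (t : ℝ)
    (hg : Good μ r c K N h) : Good μ r c (|t| * K) N (fun x => t * h x) := by
  obtain ⟨L, h1, h2, h3, h4⟩ := hg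
  refine ⟨L.map (fun p => (t * p.1, p.2)), by simpa using h1, ?_, ?_, ?_⟩
  · intro p hp
    obtain ⟨q, hq, rfl⟩ := List.mem_map.1 hp
    exact h2 q hq
  · rw [List.map_map]
    have : ((fun p : ℝ × (M → ℝ) => |p.1|) ∘ fun p : ℝ × (M → ℝ) => (t * p.1, p.2)) =
        fun p : ℝ × (M → ℝ) => |t| * |p.1| := by
      funext p; simp [abs_mul]
    rw [this, List.sum_map_mul_left]
    exact mul_le_mul_of_nonneg_left h3 (abs_nonneg t)
  · intro x
    show t * h x = _
    rw [List.map_map, h4 x]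
    have : ((fun p : ℝ × (M → ℝ) => p.1 * p.2 x) ∘ fun p : ℝ × (M → ℝ) => (t * p.1, p.2)) =
        fun p : ℝ × (M → ℝ) => t * (p.1 * p.2 x) := by
      funext p; simp; ring
    rw [this, List.sum_map_mul_left]

lemma good_sum {ι : Type*} {r : ℝ≥0∞} {c : ℝ} (s : Finset ι) (K : ι → ℝ) (N : ι → ℕ)
    (h : ι → M → ℝ) (hg : ∀ i ∈ s, Good μ r c (K i) (N i) (h i)) :
    Good μ r c (∑ i ∈ s, K i) (∑ i ∈ s, N i) (fun x => ∑ i ∈ s, h i x) := by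
  classical
  induction s using Finset.induction_on with
  | empty => simpa using good_zero le_rfl
  | insert a s' hni ih =>
    rw [Finset.sum_insert hni, Finset.sum_insert hni]
    have := good_add (hg a (Finset.mem_insert_self a s'))
      (ih (fun i hi => hg i (Finset.mem_insert_of_mem hi)))
    apply good_congr _ this
    intro x
    rw [Finset.sum_insert hni]

lemma isAtomOn_zero {r : ℝ≥0∞} {c : ℝ} (x₀ : M) (hc : 0 < c) :
    IsAtomOn μ r c (fun _ => (0:ℝ)) :=
  ⟨x₀, c, hc, le_rfl, fun _ _ => rfl, integrable_zero _ _ _, by simp, by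
    have : (fun _ : M => (0:ℝ)) = (0 : M → ℝ) := rfl
    rw [this, eLpNorm_zero]; exact zero_le⟩

lemma isAtomOn_scale_mono {r : ℝ≥0∞} {c b : ℝ} (hcb : c ≤ b) {a : M → ℝ}
    (ha : IsAtomOn μ r c a) : IsAtomOn μ r b a := by
  obtain ⟨x, s, h1, h2, h⟩ := ha
  exact ⟨x, s, h1, le_trans h2 hcb, h⟩

lemma good_single {r : ℝ≥0∞} {c : ℝ} {a : M → ℝ} (ha : IsAtomOn μ r c a) :
    Good μ r c 1 1 a :=
  ⟨[(1, a)], by simp, by simpa, by simp, by simp⟩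

lemma isAtomOn_of_bound {r : ℝ≥0∞} {c : ℝ} (x : M) (s : ℝ) (hs : 0 < s) (hsc : s ≤ c)
    (h : M → ℝ) (a₀ : ℝ)
    (hsupp : ∀ y, y ∉ ball x s → h y = 0) (hint : Integrable h μ)
    (hzero : (∫ y, h y ∂μ) = 0) (hbd : ∀ y, |h y| ≤ a₀)
    (hA : ENNReal.ofReal a₀ ≤ (μ (ball x s))⁻¹) :
    IsAtomOn μ r c h := by
  refine ⟨x, s, hs, hsc, hsupp, hint, hzero, ?_⟩
  have ha₀ : 0 ≤ a₀ := le_trans (abs_nonneg (h x)) (hbd x)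
  have h1 : eLpNorm h r μ ≤ eLpNorm ((ball x s).indicator (fun _ => a₀)) r μ := by
    apply eLpNorm_mono
    intro y
    by_cases hy : y ∈ ball x s
    · rw [Set.indicator_of_mem hy, Real.norm_eq_abs, Real.norm_eq_abs, abs_of_nonneg ha₀]
      exact hbd y
    · rw [Set.indicator_of_notMem hy, hsupp y hy]
  refine le_trans h1 (le_trans (eLpNorm_indicator_const_le a₀ r) ?_)
  have hn : ‖a₀‖ₑ = ENNReal.ofReal a₀ := by
    rw [← ofReal_norm, Real.norm_eq_abs, abs_of_nonneg ha₀]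
  rw [hn, ← exp_eq, mul_comm]
  exact mul_le_mul_right hA _

lemma good_single_bounded {r : ℝ≥0∞} {c : ℝ} (x : M) (s : ℝ) (hs : 0 < s) (hsc : s ≤ c)
    (h : M → ℝ) (a₀ K : ℝ) (hK : 0 < K)
    (hB0 : μ (ball x s) ≠ 0) (hBt : μ (ball x s) ≠ ⊤)
    (hsupp : ∀ y, y ∉ ball x s → h y = 0) (hint : Integrable h μ)
    (hzero : (∫ y, h y ∂μ) = 0) (hbd : ∀ y, |h y| ≤ a₀)
    (hA : ENNReal.ofReal a₀ * μ (ball x s) ≤ ENNReal.ofReal K) :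
    Good μ r c K 1 h := by
  have hatom : IsAtomOn μ r c (fun y => h y / K) := by
    refine isAtomOn_of_bound x s hs hsc _ (a₀ / K) (fun y hy => by rw [hsupp y hy]; simp)
      (hint.div_const K) (by rw [integral_div, hzero]; simp) (fun y => ?_) ?_
    · rw [abs_div, abs_of_pos hK]
      exact (div_le_div_iff_of_pos_right hK).mpr (hbd y)
    · rw [ENNReal.ofReal_div_of_pos hK]
      have step : ENNReal.ofReal a₀ ≤ (μ (ball x s))⁻¹ * ENNReal.ofReal K := by
        have : ENNReal.ofReal a₀ = ENNReal.ofReal a₀ * (μ (ball x s) * (μ (ball x s))⁻¹) := by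
          rw [ENNReal.mul_inv_cancel hB0 hBt, mul_one]
        rw [this, ← mul_assoc, mul_comm ((μ (ball x s))⁻¹) _]
        exact mul_le_mul_left hA _
      rw [ENNReal.div_le_iff_le_mul (Or.inl (ENNReal.ofReal_pos.mpr hK).ne') (Or.inl ENNReal.ofReal_ne_top)]
      exact step
  refine ⟨[(K, fun y => h y / K)], by simp, by simpa using hatom, by simp [abs_of_pos hK], ?_⟩
  intro x'
  have : K * (h x' / K) = h x' := by field_simp
  simp [this]

lemma atom_L1 {r : ℝ≥0∞} {c : ℝ} (hr1 : 1 ≤ r)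
    (hfin : ∀ (x : M) (s : ℝ), μ (ball x s) < ⊤)
    (hbp : ∀ (x : M) (s : ℝ), 0 < s → 0 < μ (ball x s))
    {a : M → ℝ} (ha : IsAtomOn μ r c a) : (∫ y, |a y| ∂μ) ≤ 1 := by
  obtain ⟨x, s, hs, hsc, hsupp, hint, hzero, hnorm⟩ := ha
  set B := ball x s with hB
  have hB0 : μ B ≠ 0 := (hbp x s hs).ne'
  have hBt : μ B ≠ ⊤ := (hfin x s).ne
  have hr0 : r ≠ 0 := by intro h; rw [h] at hr1; exact absurd hr1 (by simp)
  have hrle : (1:ℝ≥0∞)/r ≤ 1 := by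
    rw [ENNReal.div_le_iff_le_mul (Or.inl hr0) (Or.inr one_ne_zero), one_mul]
    exact hr1
  set q := ((1:ℝ≥0∞) - 1/r)⁻¹ with hqdef
  have hq : 1/(1:ℝ≥0∞) = 1/q + 1/r := by
    rw [hqdef, one_div ((1 - 1/r)⁻¹), inv_inv, tsub_add_cancel_of_le hrle]
    simp
  have hφ : AEStronglyMeasurable (B.indicator (fun _ => (1:ℝ))) μ :=
    (StronglyMeasurable.indicator stronglyMeasurable_const measurableSet_ball).aestronglyMeasurable
  have heq : (B.indicator (fun _ => (1:ℝ)) • a) = a := by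
    funext y
    by_cases hy : y ∈ B
    · simp [Set.indicator_of_mem hy]
    · simp [Set.indicator_of_notMem hy, hsupp y hy]
  have h2 := haveI : ENNReal.HolderTriple q r 1 := ⟨by simpa [one_div] using hq.symm⟩; eLpNorm_smul_le_mul_eLpNorm (p := q) (q := r) (r := 1) hint.aestronglyMeasurable hφ
  rw [heq] at h2
  have h3 : eLpNorm (B.indicator fun _ => (1:ℝ)) q μ ≤ μ B ^ (1/q.toReal) := by
    have := eLpNorm_indicator_const_le (s := B) (μ := μ) (1:ℝ) q
    simpa using this
  have hexp : 1/q.toReal + (1/r).toReal = 1 := by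
    have e1 : (1:ℝ)/q.toReal = (1/q).toReal := (exp_eq q).symm
    rw [e1, hqdef, one_div ((1 - 1/r)⁻¹), inv_inv,
      ENNReal.toReal_sub_of_le hrle (by simp)]
    simp
  have h5 : eLpNorm a 1 μ ≤ 1 := by
    refine le_trans h2 ?_
    calc eLpNorm (B.indicator fun _ => (1:ℝ)) q μ * eLpNorm a r μ
        ≤ μ B ^ (1/q.toReal) * (μ B ^ ((1/r).toReal) * (μ B)⁻¹) := mul_le_mul' h3 hnorm
      _ = 1 := by
          rw [← mul_assoc, ← ENNReal.rpow_add _ _ hB0 hBt, hexp, ENNReal.rpow_one,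
            ENNReal.mul_inv_cancel hB0 hBt]
  have h6 : ENNReal.ofReal (∫ y, |a y| ∂μ) ≤ 1 := by
    have : (∫ y, |a y| ∂μ) = ∫ y, ‖a y‖ ∂μ := by
      congr 1
    rw [this, ofReal_integral_norm_eq_lintegral_enorm hint, ← eLpNorm_one_eq_lintegral_enorm]
    exact h5
  exact ENNReal.ofReal_le_one.mp h6

lemma good_elim {r : ℝ≥0∞} {c K : ℝ} {N : ℕ} {h : M → ℝ} (x₀ : M) (hc : 0 < c)
    (hg : Good μ r c K N h) :
    ∃ (lam : Fin N → ℝ) (A : Fin N → M → ℝ), (∀ j, IsAtomOn μ r c (A j)) ∧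
      (∑ j, |lam j|) ≤ K ∧ ∀ x, h x = ∑ j, lam j * A j x := by
  obtain ⟨L, h1, h2, h3, h4⟩ := hg
  set Z : ℝ × (M → ℝ) := (0, fun _ => 0) with hZ
  set L' := L ++ List.replicate (N - L.length) Z with hL'
  have hatoms : ∀ p ∈ L', IsAtomOn μ r c p.2 := by
    intro p hp
    rcases List.mem_append.1 hp with hm | hm
    · exact h2 p hm
    · rw [List.eq_of_mem_replicate hm, hZ]
      exact isAtomOn_zero x₀ hc
  have hrep1 : (List.replicate (N - L.length) Z).map (fun p => |p.1|) =
      List.replicate (N - L.length) (0:ℝ) := by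
    rw [List.map_replicate, hZ]; simp
  have hsum' : (L'.map fun p => |p.1|).sum ≤ K := by
    rw [hL', List.map_append, List.sum_append, hrep1, List.sum_replicate]
    simpa using h3
  have hdecomp : ∀ x, h x = (L'.map fun p => p.1 * p.2 x).sum := by
    intro x
    have hrep2 : (List.replicate (N - L.length) Z).map (fun p => p.1 * p.2 x) =
        List.replicate (N - L.length) (0:ℝ) := by
      rw [List.map_replicate, hZ]; simp
    rw [hL', List.map_append, List.sum_append, hrep2, List.sum_replicate]
    simpa using h4 x
  have hlen : L'.length = N := by
    rw [hL', List.length_append, List.length_replicate]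
    omega
  refine ⟨fun j => (L'.get (finCongr hlen.symm j)).1,
    fun j => (L'.get (finCongr hlen.symm j)).2,
    fun j => hatoms _ (L'.get_mem _), ?_, ?_⟩
  · calc (∑ j : Fin N, |(L'.get (finCongr hlen.symm j)).1|)
        = ∑ i : Fin L'.length, |(L'.get i).1| :=
          Equiv.sum_comp (finCongr hlen.symm) (fun i => |(L'.get i).1|)
      _ = (L'.map fun p => |p.1|).sum :=
          (list_sum_map' (fun p : ℝ × (M → ℝ) => |p.1|) L').symm
      _ ≤ K := hsum'
  · intro x
    calc h x = (L'.map fun p => p.1 * p.2 x).sum := hdecomp x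
      _ = ∑ i : Fin L'.length, (L'.get i).1 * (L'.get i).2 x :=
          list_sum_map' (fun p : ℝ × (M → ℝ) => p.1 * p.2 x) L'
      _ = ∑ j : Fin N, (L'.get (finCongr hlen.symm j)).1 * (L'.get (finCongr hlen.symm j)).2 x :=
          (Equiv.sum_comp (finCongr hlen.symm)
            (fun i => (L'.get i).1 * (L'.get i).2 x)).symm

variable (μ)

noncomputable def bump (μ : MeasureTheory.Measure M) (δ : ℝ) (p : M) : M → ℝ :=
  (ball p δ).indicator fun _ => ((μ (ball p δ)).toReal)⁻¹

lemma bump_integrable (δ : ℝ) (p : M)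
    (hfin : ∀ (x : M) (s : ℝ), μ (ball x s) < ⊤) : Integrable (bump μ δ p) μ := by
  rw [bump, integrable_indicator_iff measurableSet_ball]
  exact integrableOn_const (hfin p δ).ne

lemma bump_integral (δ : ℝ) (p : M) (hδ : 0 < δ)
    (hfin : ∀ (x : M) (s : ℝ), μ (ball x s) < ⊤)
    (hbp : ∀ (x : M) (s : ℝ), 0 < s → 0 < μ (ball x s)) :
    (∫ y, bump μ δ p y ∂μ) = 1 := by
  rw [bump, integral_indicator_const _ measurableSet_ball, smul_eq_mul]
  have h0 : (μ (ball p δ)).toReal ≠ 0 :=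
    ENNReal.toReal_ne_zero.mpr ⟨(hbp p δ hδ).ne', (hfin p δ).ne⟩
  field_simp
  rfl

lemma bump_abs_le (δ : ℝ) (p : M) (y : M)
    (hbp : ∀ (x : M) (s : ℝ), 0 < s → 0 < μ (ball x s)) (hδ : 0 < δ) :
    |bump μ δ p y| ≤ ((μ (ball p δ)).toReal)⁻¹ := by
  rw [bump]
  by_cases hy : y ∈ ball p δ
  · rw [Set.indicator_of_mem hy, abs_of_nonneg (by positivity)]
  · rw [Set.indicator_of_notMem hy]
    simp only [abs_zero]
    positivity

lemma bump_supp (δ : ℝ) (p : M) (y : M) (hy : y ∉ ball p δ) : bump μ δ p y = 0 := by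
  rw [bump, Set.indicator_of_notMem hy]

lemma ofReal_toReal_inv {A : ℝ≥0∞} (hA0 : A ≠ 0) :
    ENNReal.ofReal (A.toReal⁻¹) = A⁻¹ := by
  rw [← ENNReal.toReal_inv, ENNReal.ofReal_toReal (by simp [hA0])]

lemma bump_good {r : ℝ≥0∞} {c : ℝ}
    (hfin : ∀ (x : M) (s : ℝ), μ (ball x s) < ⊤)
    (hbp : ∀ (x : M) (s : ℝ), 0 < s → 0 < μ (ball x s))
    (δ τ : ℝ) (hδ : 0 < δ) (hτ : 0 < τ) (hτδc : τ + δ = c)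
    (R₀ β : ℝ) (hR₀τ : R₀ ≤ τ) (hβ0 : 0 < β) (hβ1 : β < 1)
    (hAMP : ∀ x y : M, R₀ < dist x y → ∃ (z : M) (s : ℝ),
      s < β * dist x y ∧ x ∈ ball z s ∧ y ∈ ball z s)
    (CE : ℝ≥0∞) (hCE1 : 1 ≤ CE) (hCEt : CE ≠ ⊤)
    (Hcmp : ∀ p q : M, dist p q ≤ τ → μ (ball p c) ≤ CE * μ (ball q δ)) :
    ∀ (k : ℕ) (x y : M), dist x y ≤ τ / β ^ k →
      Good μ r c ((2*CE.toReal) * 2^k) (2^k) (fun w => bump μ δ x w - bump μ δ y w) := by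
  have hc : 0 < c := by linarith
  have hδc : δ ≤ c := by linarith
  have hCE0 : (0:ℝ) < CE.toReal := by
    have := ENNReal.toReal_mono hCEt hCE1
    simpa using lt_of_lt_of_le one_pos this
  -- base case : dist x y ≤ τ
  have base : ∀ x y : M, dist x y ≤ τ →
      Good μ r c (2*CE.toReal) 1 (fun w => bump μ δ x w - bump μ δ y w) := by
    intro x y hd
    have hBx0 : μ (ball x δ) ≠ 0 := (hbp x δ hδ).ne'
    have hBy0 : μ (ball y δ) ≠ 0 := (hbp y δ hδ).ne'
    have hsupp : ∀ w, w ∉ ball x c → bump μ δ x w - bump μ δ y w = 0 := by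
      intro w hw
      have h1 : w ∉ ball x δ := fun hmem => hw (ball_subset_ball hδc hmem)
      have h2 : w ∉ ball y δ := by
        intro hmem
        apply hw
        rw [mem_ball] at hmem ⊢
        calc dist w x ≤ dist w y + dist y x := dist_triangle _ _ _
          _ < δ + τ := add_lt_add_of_lt_of_le hmem (by rwa [dist_comm])
          _ = c := by linarith
      rw [bump_supp μ δ x w h1, bump_supp μ δ y w h2, sub_zero]
    refine good_single_bounded x c hc le_rfl _
      (((μ (ball x δ)).toReal)⁻¹ + ((μ (ball y δ)).toReal)⁻¹) (2*CE.toReal)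
      (by positivity) (hbp x c hc).ne' (hfin x c).ne hsupp
      ((bump_integrable μ δ x hfin).sub (bump_integrable μ δ y hfin)) ?_ ?_ ?_
    · rw [integral_sub (bump_integrable μ δ x hfin) (bump_integrable μ δ y hfin),
        bump_integral μ δ x hδ hfin hbp, bump_integral μ δ y hδ hfin hbp, sub_self]
    · intro w
      calc |bump μ δ x w - bump μ δ y w| ≤ |bump μ δ x w| + |bump μ δ y w| := abs_sub _ _
        _ ≤ _ := add_le_add (bump_abs_le μ δ x w hbp hδ) (bump_abs_le μ δ y w hbp hδ)
    · have hsum : ENNReal.ofReal (((μ (ball x δ)).toReal)⁻¹ + ((μ (ball y δ)).toReal)⁻¹)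
          ≤ (μ (ball x δ))⁻¹ + (μ (ball y δ))⁻¹ := by
        refine le_trans ENNReal.ofReal_add_le ?_
        rw [ofReal_toReal_inv hBx0, ofReal_toReal_inv hBy0]
      have hKeq : ENNReal.ofReal (2*CE.toReal) = 2 * CE := by
        rw [ENNReal.ofReal_mul (by norm_num), ENNReal.ofReal_toReal hCEt]
        norm_num
      rw [hKeq]
      calc ENNReal.ofReal (((μ (ball x δ)).toReal)⁻¹ + ((μ (ball y δ)).toReal)⁻¹) * μ (ball x c)
          ≤ ((μ (ball x δ))⁻¹ + (μ (ball y δ))⁻¹) * μ (ball x c) :=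
            mul_le_mul_left hsum _
        _ = (μ (ball x δ))⁻¹ * μ (ball x c) + (μ (ball y δ))⁻¹ * μ (ball x c) := by
            rw [add_mul]
        _ ≤ (μ (ball x δ))⁻¹ * (CE * μ (ball x δ)) + (μ (ball y δ))⁻¹ * (CE * μ (ball y δ)) := by
            gcongr
            · exact Hcmp x x (by simp [hτ.le])
            · exact Hcmp x y hd
        _ = CE * ((μ (ball x δ))⁻¹ * μ (ball x δ)) + CE * ((μ (ball y δ))⁻¹ * μ (ball y δ)) := by
            ring
        _ = 2 * CE := by
            rw [ENNReal.inv_mul_cancel hBx0 (hfin x δ).ne,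
              ENNReal.inv_mul_cancel hBy0 (hfin y δ).ne]
            ring
  intro k
  induction k with
  | zero =>
    intro x y hd
    have := base x y (by simpa using hd)
    simpa using this
  | succ k ih =>
    intro x y hd
    by_cases hdτ : dist x y ≤ τ
    · refine good_mono ?_ ?_ (base x y hdτ)
      · have h1 : (1:ℝ) ≤ 2^(k+1) := one_le_pow₀ (by norm_num : (1:ℝ) ≤ 2)
        nlinarith
      · exact Nat.one_le_two_pow
    · push_neg at hdτ
      obtain ⟨z, s, hs, hxz, hyz⟩ := hAMP x y (lt_of_le_of_lt hR₀τ hdτ)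
      have hβk : (0:ℝ) < β ^ k := by positivity
      have hdist : β * dist x y ≤ τ / β ^ k := by
        have : dist x y ≤ τ / β^(k+1) := hd
        rw [pow_succ] at this
        rw [div_mul_eq_div_div] at this
        calc β * dist x y ≤ β * (τ / β^k / β) := by nlinarith
          _ = τ / β^k := by
              field_simp
      have hxz' : dist x z ≤ τ / β^k := by
        rw [mem_ball] at hxz
        linarith [hxz.trans hs]
      have hzy' : dist z y ≤ τ / β^k := by
        rw [mem_ball] at hyz
        rw [dist_comm]
        linarith [hyz.trans hs]
      have hadd := good_add (ih x z hxz') (ih z y hzy')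
      refine good_mono (le_of_eq (by ring)) (le_of_eq (by ring)) (good_congr ?_ hadd)
      intro w
      ring

lemma net {b δ : ℝ} (hδ : 0 < δ)
    (hfin : ∀ (x : M) (s : ℝ), μ (ball x s) < ⊤)
    (hbp : ∀ (x : M) (s : ℝ), 0 < s → 0 < μ (ball x s))
    (CE : ℝ≥0∞) (hCEt : CE ≠ ⊤)
    (Hcmp : ∀ (x₀ p : M) (s : ℝ), 0 < s → s ≤ b → p ∈ ball x₀ s →
       μ (ball x₀ (2*s)) ≤ CE * μ (ball p (δ/2)))
    (N₀ : ℕ) (hN₀ : CE.toReal ≤ N₀) :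
    ∀ (x₀ : M) (s : ℝ), 0 < s → s ≤ b → δ ≤ s →
      ∃ (n : ℕ) (y : Fin n → M), n ≤ N₀ ∧ 0 < n ∧ (∀ i, y i ∈ ball x₀ s) ∧
        ball x₀ s ⊆ ⋃ i, ball (y i) δ := by
  intro x₀ s hs hsb hδs
  classical
  set Sep : Finset M → Prop := fun S =>
    (∀ p ∈ S, p ∈ ball x₀ s) ∧ (S : Set M).Pairwise fun p q => δ ≤ dist p q with hSep
  have hV0 : μ (ball x₀ (2*s)) ≠ 0 := (hbp x₀ (2*s) (by linarith)).ne'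
  have hVt : μ (ball x₀ (2*s)) ≠ ⊤ := (hfin x₀ (2*s)).ne
  have cardbd : ∀ S : Finset M, Sep S → S.card ≤ N₀ := by
    intro S hS
    have hdisj : (S : Set M).PairwiseDisjoint (fun p => ball p (δ/2)) := by
      intro p hp q hq hpq
      exact Metric.ball_disjoint_ball (by linarith [hS.2 hp hq hpq] : δ/2 + δ/2 ≤ dist p q)
    have hmeas := measure_biUnion_finset (μ := μ) hdisj (fun p _ => measurableSet_ball)
    have hsub : (⋃ p ∈ S, ball p (δ/2)) ⊆ ball x₀ (2*s) := by
      intro w hw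
      obtain ⟨p, hp, hwp⟩ := by simpa using hw
      have hpx : dist p x₀ < s := hS.1 p hp
      rw [mem_ball] at *
      calc dist w x₀ ≤ dist w p + dist p x₀ := dist_triangle _ _ _
        _ < δ/2 + s := add_lt_add hwp hpx
        _ ≤ 2*s := by linarith
    have key : (S.card : ℝ≥0∞) * μ (ball x₀ (2*s)) ≤ CE * μ (ball x₀ (2*s)) := by
      calc (S.card : ℝ≥0∞) * μ (ball x₀ (2*s)) = ∑ p ∈ S, μ (ball x₀ (2*s)) := by
            rw [Finset.sum_const, nsmul_eq_mul]
        _ ≤ ∑ p ∈ S, CE * μ (ball p (δ/2)) := by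
            refine Finset.sum_le_sum (fun p hp => ?_)
            exact Hcmp x₀ p s hs hsb (hS.1 p hp)
        _ = CE * ∑ p ∈ S, μ (ball p (δ/2)) := by rw [Finset.mul_sum]
        _ = CE * μ (⋃ p ∈ S, ball p (δ/2)) := by rw [hmeas]
        _ ≤ CE * μ (ball x₀ (2*s)) := mul_le_mul_right (measure_mono hsub) _
    have hle : (S.card : ℝ≥0∞) ≤ CE := by
      rwa [ENNReal.mul_le_mul_iff_left hV0 hVt] at key
    have : (S.card : ℝ) ≤ CE.toReal := by
      have := ENNReal.toReal_mono hCEt hle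
      simpa using this
    exact_mod_cast le_trans this hN₀
  set 𝒞 : Set ℕ := {n | ∃ S : Finset M, Sep S ∧ S.card = n} with h𝒞
  have h1mem : 1 ∈ 𝒞 := by
    refine ⟨{x₀}, ⟨?_, ?_⟩, Finset.card_singleton x₀⟩
    · intro p hp
      rw [Finset.mem_singleton] at hp
      rw [hp]
      exact mem_ball_self hs
    · simp
  have hbdd : BddAbove 𝒞 := by
    refine ⟨N₀, fun n hn => ?_⟩
    obtain ⟨S, hS, rfl⟩ := hn
    exact cardbd S hS
  obtain ⟨S, hS, hcard⟩ := Nat.sSup_mem ⟨1, h1mem⟩ hbdd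
  have hmax : ∀ z ∈ ball x₀ s, ∃ p ∈ S, dist z p < δ := by
    by_contra hcon
    push_neg at hcon
    obtain ⟨z, hz, hzp⟩ := hcon
    have hzS : z ∉ S := by
      intro hmem
      have := hzp z hmem
      rw [dist_self] at this
      linarith
    have hSep' : Sep (insert z S) := by
      constructor
      · intro p hp
        rcases Finset.mem_insert.1 hp with rfl | hp
        · exact hz
        · exact hS.1 p hp
      · rw [Finset.coe_insert]
        rw [@Set.pairwise_insert_of_symm M (fun p q => δ ≤ dist p q) _ _ ⟨fun p q h => by rwa [dist_comm]⟩]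
        exact ⟨hS.2, fun q hq _ => hzp q hq⟩
    have : sSup 𝒞 + 1 ∈ 𝒞 := ⟨insert z S, hSep', by
      rw [Finset.card_insert_of_notMem hzS, hcard]⟩
    have := le_csSup hbdd this
    omega
  refine ⟨S.card, fun i => (S.equivFin.symm i : M), hcard ▸ cardbd S hS, ?_, ?_, ?_⟩
  · have h1 : 1 ≤ sSup 𝒞 := le_csSup hbdd h1mem
    omega
  · intro i
    exact hS.1 _ (S.equivFin.symm i).2
  · intro z hz
    obtain ⟨p, hp, hzp⟩ := hmax z hz
    refine Set.mem_iUnion.2 ⟨S.equivFin ⟨p, hp⟩, ?_⟩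
    rw [mem_ball]
    simpa using hzp

lemma rpow_cmp (α : ℝ) (hα0 : 0 ≤ α) (hα1 : α ≤ 1) (X Y C : ℝ≥0∞)
    (hX0 : X ≠ 0) (hXt : X ≠ ⊤) (hY0 : Y ≠ 0) (hYt : Y ≠ ⊤)
    (hC1 : 1 ≤ C) (hXY : X ≤ C * Y) (hYX : Y ≤ C * X) :
    X ^ α * X⁻¹ ≤ C^2 * (Y ^ α * Y⁻¹) := by
  have h1 : X^α ≤ C * Y^α := by
    calc X^α ≤ (C*Y)^α := ENNReal.rpow_le_rpow hXY hα0
      _ = C^α * Y^α := ENNReal.mul_rpow_of_nonneg _ _ hα0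
      _ ≤ C^(1:ℝ) * Y^α := by
          exact mul_le_mul_left (ENNReal.rpow_le_rpow_of_exponent_le hC1 hα1) _
      _ = C * Y^α := by rw [ENNReal.rpow_one]
  have h2 : X⁻¹ ≤ C * Y⁻¹ := by
    calc X⁻¹ = X⁻¹ * Y * Y⁻¹ := by
          rw [mul_assoc, ENNReal.mul_inv_cancel hY0 hYt, mul_one]
      _ ≤ (X⁻¹ * (C * X)) * Y⁻¹ := by
          exact mul_le_mul_left (mul_le_mul_right hYX _) _
      _ = (C * (X⁻¹ * X)) * Y⁻¹ := by ring_nf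
      _ = C * Y⁻¹ := by rw [ENNReal.inv_mul_cancel hX0 hXt, mul_one]
  calc X^α * X⁻¹ ≤ (C * Y^α) * (C * Y⁻¹) := mul_le_mul' h1 h2
    _ = C^2 * (Y^α * Y⁻¹) := by ring

lemma good_single_eLp {r : ℝ≥0∞} {c : ℝ} (x : M) (s : ℝ) (hs : 0 < s) (hsc : s ≤ c)
    (h : M → ℝ) (K : ℝ) (hK : 0 < K)
    (hsupp : ∀ y, y ∉ ball x s → h y = 0) (hint : Integrable h μ)
    (hzero : (∫ y, h y ∂μ) = 0)
    (hnorm : eLpNorm h r μ ≤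
      ENNReal.ofReal K * (μ (ball x s) ^ ((1/r).toReal) * (μ (ball x s))⁻¹)) :
    Good μ r c K 1 h := by
  have hK0 : ENNReal.ofReal K ≠ 0 := (ENNReal.ofReal_pos.mpr hK).ne'
  have hatom : IsAtomOn μ r c (fun y => h y / K) := by
    refine ⟨x, s, hs, hsc, fun y hy => by show h y / K = 0; rw [hsupp y hy]; simp,
      hint.div_const K, by rw [integral_div, hzero]; simp, ?_⟩
    have heq : (fun y => h y / K) = K⁻¹ • h := by
      funext y
      simp [div_eq_inv_mul]
    rw [heq, eLpNorm_const_smul]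
    have hn : ‖K⁻¹‖ₑ = (ENNReal.ofReal K)⁻¹ := by
      rw [← ofReal_norm, Real.norm_eq_abs, abs_of_pos (by positivity),
        ENNReal.ofReal_inv_of_pos hK]
    rw [hn]
    calc (ENNReal.ofReal K)⁻¹ * eLpNorm h r μ
        ≤ (ENNReal.ofReal K)⁻¹ * (ENNReal.ofReal K *
            (μ (ball x s) ^ ((1/r).toReal) * (μ (ball x s))⁻¹)) := mul_le_mul_right hnorm _
      _ = _ := by
          rw [← mul_assoc, ENNReal.inv_mul_cancel hK0 ENNReal.ofReal_ne_top, one_mul]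
  refine ⟨[(K, fun y => h y / K)], by simp, by simpa using hatom, by simp [abs_of_pos hK], ?_⟩
  intro x'
  have : K * (h x' / K) = h x' := by field_simp
  simp [this]

lemma bump_eLpNorm {r : ℝ≥0∞} (δ : ℝ) (p : M) (hδ : 0 < δ)
    (hbp : ∀ (x : M) (s : ℝ), 0 < s → 0 < μ (ball x s)) :
    eLpNorm (bump μ δ p) r μ ≤ μ (ball p δ) ^ ((1/r).toReal) * (μ (ball p δ))⁻¹ := by
  rw [bump]
  refine le_trans (eLpNorm_indicator_const_le _ r) ?_
  have hn : ‖((μ (ball p δ)).toReal)⁻¹‖ₑ = (μ (ball p δ))⁻¹ := by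
    rw [← ofReal_norm, Real.norm_eq_abs, abs_of_nonneg (by positivity),
      ofReal_toReal_inv (hbp p δ hδ).ne']
  rw [hn, ← exp_eq, mul_comm]

lemma atom_split {r : ℝ≥0∞} {c b : ℝ} (hr1 : 1 ≤ r)
    (hfin : ∀ (x : M) (s : ℝ), μ (ball x s) < ⊤)
    (hbp : ∀ (x : M) (s : ℝ), 0 < s → 0 < μ (ball x s))
    (δ : ℝ) (hδ : 0 < δ) (hδc : δ ≤ c) (hc : 0 < c) (hcb : c < b)
    (CE : ℝ≥0∞) (hCE1 : 1 ≤ CE) (hCEt : CE ≠ ⊤)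
    (Hc1 : ∀ (x₀ p : M) (s : ℝ), c < s → s ≤ b → p ∈ ball x₀ s →
      μ (ball p c) ≤ CE * μ (ball x₀ s))
    (Hc2 : ∀ (x₀ p : M) (s : ℝ), c < s → s ≤ b → p ∈ ball x₀ s →
      μ (ball x₀ s) ≤ CE * μ (ball p c))
    (Hc3 : ∀ p : M, μ (ball p c) ≤ CE * μ (ball p δ))
    (KA : ℝ) (NA : ℕ) (hKA : 0 ≤ KA)
    (Hbump : ∀ x y : M, dist x y ≤ 2*b →
      Good μ r c KA NA (fun w => bump μ δ x w - bump μ δ y w))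
    (N₀ : ℕ)
    (Hnet : ∀ (x₀ : M) (s : ℝ), 0 < s → s ≤ b → δ ≤ s →
      ∃ (n : ℕ) (y : Fin n → M), n ≤ N₀ ∧ 0 < n ∧ (∀ i, y i ∈ ball x₀ s) ∧
        ball x₀ s ⊆ ⋃ i, ball (y i) δ)
    {a : M → ℝ} (ha : IsAtomOn μ r b a) :
    Good μ r c (1 + N₀ * (2 * CE^2).toReal + KA) (N₀ * (NA + 1) + 1) a := by
  classical
  have hK₁0 : (0:ℝ) ≤ (2 * CE^2).toReal := ENNReal.toReal_nonneg
  obtain ⟨x₀, s, hs, hsb, hsupp, hint, hzero, hnorm⟩ := ha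
  by_cases hsc : s ≤ c
  · refine good_mono ?_ (by omega) (good_single ⟨x₀, s, hs, hsc, hsupp, hint, hzero, hnorm⟩)
    nlinarith [mul_nonneg (Nat.cast_nonneg (α := ℝ) N₀) hK₁0]
  · push_neg at hsc
    obtain ⟨n, y, hnN₀, hn0, hymem, hcover⟩ := Hnet x₀ s hs hsb (by linarith)
    set i₀ : Fin n := ⟨0, hn0⟩ with hi₀
    set E : Fin n → Set M := fun i =>
      (ball x₀ s ∩ ball (y i) δ) \ ⋃ (j : Fin n) (_ : j < i), ball (y j) δ with hE
    have hEmeas : ∀ i, MeasurableSet (E i) := fun i =>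
      ((measurableSet_ball.inter measurableSet_ball).diff
        (MeasurableSet.iUnion fun j => MeasurableSet.iUnion fun _ => measurableSet_ball))
    have hEsub : ∀ i, E i ⊆ ball (y i) δ := fun i w hw => hw.1.2
    have hEsubB : ∀ i, E i ⊆ ball x₀ s := fun i w hw => hw.1.1
    have hpart : ∀ (h : M → ℝ), (∀ w, w ∉ ball x₀ s → h w = 0) →
        ∀ w, h w = ∑ i, (E i).indicator h w := by
      intro h hh w
      by_cases hw : w ∈ ball x₀ s
      · have hex : ∃ m : ℕ, ∃ hm : m < n, w ∈ ball (y ⟨m, hm⟩) δ := by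
          obtain ⟨i, hi⟩ := Set.mem_iUnion.1 (hcover hw)
          exact ⟨i.1, i.2, by simpa using hi⟩
        set m₀ := Nat.find hex with hm₀def
        obtain ⟨hm₀n, hwm₀⟩ := Nat.find_spec hex
        set iw : Fin n := ⟨m₀, hm₀n⟩ with hiw
        have hwE : w ∈ E iw := by
          refine ⟨⟨hw, hwm₀⟩, ?_⟩
          simp only [Set.mem_iUnion, not_exists]
          intro j hj hwj
          exact Nat.find_min hex (show j.1 < m₀ from hj) ⟨j.2, hwj⟩
        rw [Finset.sum_eq_single iw]
        · rw [Set.indicator_of_mem hwE]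
        · intro j _ hji
          apply Set.indicator_of_notMem
          intro hwj
          rcases lt_or_gt_of_ne hji with hlt | hgt
          · exact Nat.find_min hex (show j.1 < m₀ from hlt) ⟨j.2, hwj.1.2⟩
          · exact hwj.2 (Set.mem_iUnion.2 ⟨iw, Set.mem_iUnion.2 ⟨hgt, hwm₀⟩⟩)
        · intro hni
          exact absurd (Finset.mem_univ iw) hni
      · rw [hh w hw]
        symm
        apply Finset.sum_eq_zero
        intro i _
        exact Set.indicator_of_notMem (fun hwE => hw (hEsubB i hwE)) _
    set m : Fin n → ℝ := fun i => ∫ w, (E i).indicator a w ∂μ with hm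
    have hintEi : ∀ i, Integrable ((E i).indicator a) μ := fun i => hint.indicator (hEmeas i)
    have hmsum0 : ∑ i, m i = 0 := by
      rw [hm, ← integral_finset_sum _ (fun i _ => hintEi i), ← hzero]
      congr 1
      funext w
      exact (hpart a hsupp w).symm
    have hmabs_sum : (∑ i, |m i|) ≤ 1 := by
      have habs : ∀ i, |m i| ≤ ∫ w, (E i).indicator (fun w => |a w|) w ∂μ := by
        intro i
        refine le_trans (le_trans (le_of_eq (Real.norm_eq_abs _).symm)
          (norm_integral_le_integral_norm _)) (le_of_eq ?_)
        congr 1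
        funext w
        rw [Real.norm_eq_abs]
        by_cases hwE : w ∈ E i
        · rw [Set.indicator_of_mem hwE, Set.indicator_of_mem hwE]
        · rw [Set.indicator_of_notMem hwE, Set.indicator_of_notMem hwE, abs_zero]
      calc (∑ i, |m i|) ≤ ∑ i, ∫ w, (E i).indicator (fun w => |a w|) w ∂μ :=
            Finset.sum_le_sum (fun i _ => habs i)
        _ = ∫ w, ∑ i, (E i).indicator (fun w => |a w|) w ∂μ :=
            (integral_finset_sum _ (fun i _ => hint.abs.indicator (hEmeas i))).symm
        _ = ∫ w, |a w| ∂μ := by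
            congr 1
            funext w
            exact (hpart (fun w => |a w|)
              (fun w hw => by show |a w| = 0; rw [hsupp w hw, abs_zero]) w).symm
        _ ≤ 1 := atom_L1 hr1 hfin hbp ⟨x₀, s, hs, hsb, hsupp, hint, hzero, hnorm⟩
    have hm1 : ∀ i, |m i| ≤ 1 := fun i =>
      le_trans (Finset.single_le_sum (fun j _ => abs_nonneg (m j)) (Finset.mem_univ i)) hmabs_sum
    -- α facts
    set α : ℝ := ((1:ℝ≥0∞)/r).toReal with hα
    have hα0 : 0 ≤ α := ENNReal.toReal_nonneg
    have hα1 : α ≤ 1 := by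
      have h1r : (1:ℝ≥0∞)/r ≤ 1 := by
        rw [ENNReal.div_le_iff_le_mul (Or.inl (by intro h; rw [h] at hr1; exact absurd hr1 (by simp)))
          (Or.inr one_ne_zero), one_mul]
        exact hr1
      have := ENNReal.toReal_mono (by simp) h1r
      rw [hα, exp_eq, one_div]
      simpa using this
    have hCE0 : CE ≠ 0 := by
      intro h; rw [h] at hCE1; exact absurd hCE1 (by simp)
    have hKK : ENNReal.ofReal ((2 * CE^2).toReal) = 2 * CE^2 := by
      refine ENNReal.ofReal_toReal ?_
      exact ENNReal.mul_ne_top (by simp) (by simp [ENNReal.pow_ne_top hCEt])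
    have hK₁pos : (0:ℝ) < (2 * CE^2).toReal :=
      ENNReal.toReal_pos (mul_ne_zero (by norm_num) (pow_ne_zero 2 hCE0))
        (ENNReal.mul_ne_top (by simp) (ENNReal.pow_ne_top hCEt))
    have hbump_int : ∀ i : Fin n, Integrable (fun w => m i * bump μ δ (y i) w) μ := fun i =>
      (bump_integrable μ δ (y i) hfin).const_mul (m i)
    have hgood_i : ∀ i : Fin n, Good μ r c ((2 * CE^2).toReal) 1
        (fun w => (E i).indicator a w - m i * bump μ δ (y i) w) := by
      intro i
      have hyB := hymem i
      have hBi0 : μ (ball (y i) c) ≠ 0 := (hbp _ c hc).ne'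
      have hBit : μ (ball (y i) c) ≠ ⊤ := (hfin _ c).ne
      have hB0 : μ (ball x₀ s) ≠ 0 := (hbp _ s hs).ne'
      have hBt : μ (ball x₀ s) ≠ ⊤ := (hfin _ s).ne
      have hBd0 : μ (ball (y i) δ) ≠ 0 := (hbp _ δ hδ).ne'
      have hBdt : μ (ball (y i) δ) ≠ ⊤ := (hfin _ δ).ne
      refine good_single_eLp μ (y i) c hc le_rfl _ _ hK₁pos ?_
        ((hintEi i).sub (hbump_int i)) ?_ ?_
      · intro w hw
        have h1 : w ∉ E i := fun hwE => hw (ball_subset_ball hδc (hEsub i hwE))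
        have h2 : w ∉ ball (y i) δ := fun hmem => hw (ball_subset_ball hδc hmem)
        show (E i).indicator a w - m i * bump μ δ (y i) w = 0
        rw [Set.indicator_of_notMem h1, bump_supp μ δ (y i) w h2]
        ring
      · rw [integral_sub (hintEi i) (hbump_int i), integral_const_mul,
          bump_integral μ δ (y i) hδ hfin hbp]
        have hdef : (∫ w, (E i).indicator a w ∂μ) = m i := rfl
        rw [hdef]
        ring
      · have hmono : eLpNorm ((E i).indicator a - fun w => m i * bump μ δ (y i) w) r μ ≤
            eLpNorm ((E i).indicator a) r μ + eLpNorm (fun w => m i * bump μ δ (y i) w) r μ :=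
          eLpNorm_sub_le (hintEi i).aestronglyMeasurable (hbump_int i).aestronglyMeasurable hr1
        have hra : eLpNorm ((E i).indicator a) r μ ≤
            CE^2 * (μ (ball (y i) c) ^ α * (μ (ball (y i) c))⁻¹) := by
          refine le_trans (le_trans (eLpNorm_mono (fun w => ?_)) hnorm) ?_
          · by_cases hwE : w ∈ E i
            · rw [Set.indicator_of_mem hwE]
            · rw [Set.indicator_of_notMem hwE]
              simp
          · exact rpow_cmp α hα0 hα1 _ _ CE hB0 hBt hBi0 hBit hCE1
              (Hc2 x₀ (y i) s hsc hsb hyB) (Hc1 x₀ (y i) s hsc hsb hyB)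
        have hrb : eLpNorm (fun w => m i * bump μ δ (y i) w) r μ ≤
            CE^2 * (μ (ball (y i) c) ^ α * (μ (ball (y i) c))⁻¹) := by
          have heq : (fun w => m i * bump μ δ (y i) w) = m i • bump μ δ (y i) := rfl
          rw [heq, eLpNorm_const_smul]
          have h1 : ‖m i‖ₑ ≤ 1 := by
            rw [← ofReal_norm, Real.norm_eq_abs]
            exact ENNReal.ofReal_le_one.2 (hm1 i)
          calc ‖m i‖ₑ * eLpNorm (bump μ δ (y i)) r μ
              ≤ 1 * (μ (ball (y i) δ) ^ α * (μ (ball (y i) δ))⁻¹) :=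
                mul_le_mul' h1 (bump_eLpNorm μ δ (y i) hδ hbp)
            _ = μ (ball (y i) δ) ^ α * (μ (ball (y i) δ))⁻¹ := one_mul _
            _ ≤ CE^2 * (μ (ball (y i) c) ^ α * (μ (ball (y i) c))⁻¹) :=
                rpow_cmp α hα0 hα1 _ _ CE hBd0 hBdt hBi0 hBit hCE1
                  (le_trans (measure_mono (ball_subset_ball hδc))
                    (le_mul_of_one_le_left (zero_le) hCE1))
                  (Hc3 (y i))
        have hsub : (fun w => (E i).indicator a w - m i * bump μ δ (y i) w) =
            ((E i).indicator a - fun w => m i * bump μ δ (y i) w) := rfl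
        rw [hsub, hKK]
        calc eLpNorm ((E i).indicator a - fun w => m i * bump μ δ (y i) w) r μ
            ≤ CE^2 * (μ (ball (y i) c) ^ α * (μ (ball (y i) c))⁻¹) +
              CE^2 * (μ (ball (y i) c) ^ α * (μ (ball (y i) c))⁻¹) :=
              le_trans hmono (add_le_add hra hrb)
          _ = 2 * CE^2 * (μ (ball (y i) c) ^ α * (μ (ball (y i) c))⁻¹) := by ring
    have hdiff_i : ∀ i : Fin n, Good μ r c (|m i| * KA) NA
        (fun w => m i * (bump μ δ (y i) w - bump μ δ (y i₀) w)) := by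
      intro i
      refine good_smul (m i) (Hbump (y i) (y i₀) ?_)
      have h1 := mem_ball.1 (hymem i)
      have h2 := mem_ball.1 (hymem i₀)
      calc dist (y i) (y i₀) ≤ dist (y i) x₀ + dist x₀ (y i₀) := dist_triangle _ _ _
        _ ≤ s + s := by
            rw [dist_comm x₀ (y i₀)]
            exact add_le_add h1.le h2.le
        _ ≤ 2 * b := by linarith
    have hcomb : ∀ i : Fin n, Good μ r c ((2*CE^2).toReal + |m i| * KA) (1 + NA)
        (fun w => ((E i).indicator a w - m i * bump μ δ (y i) w) +
          m i * (bump μ δ (y i) w - bump μ δ (y i₀) w)) :=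
      fun i => good_add (hgood_i i) (hdiff_i i)
    have htot := good_sum Finset.univ (fun i : Fin n => (2*CE^2).toReal + |m i| * KA)
      (fun _ => 1 + NA)
      (fun i w => ((E i).indicator a w - m i * bump μ δ (y i) w) +
        m i * (bump μ δ (y i) w - bump μ δ (y i₀) w))
      (fun i _ => hcomb i)
    have hid : ∀ w, (∑ i : Fin n, (((E i).indicator a w - m i * bump μ δ (y i) w) +
        m i * (bump μ δ (y i) w - bump μ δ (y i₀) w))) = a w := by
      intro w
      have h1 : ∀ i : Fin n, ((E i).indicator a w - m i * bump μ δ (y i) w) +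
          m i * (bump μ δ (y i) w - bump μ δ (y i₀) w)
          = (E i).indicator a w - m i * bump μ δ (y i₀) w := fun i => by ring
      rw [Finset.sum_congr rfl (fun i _ => h1 i), Finset.sum_sub_distrib, ← Finset.sum_mul,
        hmsum0, zero_mul, sub_zero]
      exact (hpart a hsupp w).symm
    refine good_mono ?_ ?_ (good_congr hid htot)
    · have hcast : (n:ℝ) ≤ (N₀:ℝ) := by exact_mod_cast hnN₀
      calc ∑ i : Fin n, ((2*CE^2).toReal + |m i| * KA)
          = (n:ℝ) * (2*CE^2).toReal + (∑ i : Fin n, |m i|) * KA := by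
            rw [Finset.sum_add_distrib, Finset.sum_const, Finset.card_univ, Fintype.card_fin,
              nsmul_eq_mul, ← Finset.sum_mul]
        _ ≤ (N₀:ℝ) * (2*CE^2).toReal + 1 * KA := by
            refine add_le_add (mul_le_mul_of_nonneg_right hcast hK₁0)
              (mul_le_mul_of_nonneg_right hmabs_sum hKA)
        _ ≤ 1 + (N₀:ℝ) * (2*CE^2).toReal + KA := by linarith
    · rw [Finset.sum_const, Finset.card_univ, Fintype.card_fin, smul_eq_mul]
      have : n * (1 + NA) ≤ N₀ * (NA + 1) := by
        rw [Nat.add_comm 1 NA]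
        exact Nat.mul_le_mul_right _ hnN₀
      omega


lemma atom_integrable {μ : MeasureTheory.Measure M} {r : ℝ≥0∞} {c : ℝ} {a : M → ℝ}
    (h : IsAtomOn μ r c a) : Integrable a μ := by
  obtain ⟨_, _, _, _, _, h, _, _⟩ := h
  exact h

lemma hardy_transfer {r : ℝ≥0∞} {c b : ℝ} (hr1 : 1 ≤ r) (hc : 0 < c) (x₀ : M)
    (hfin : ∀ (x : M) (s : ℝ), μ (ball x s) < ⊤)
    (hbp : ∀ (x : M) (s : ℝ), 0 < s → 0 < μ (ball x s))
    (K : ℝ) (hK1 : 1 ≤ K) (Ns : ℕ) (hN : 0 < Ns)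
    (Hdec : ∀ a : M → ℝ, IsAtomOn μ r b a → Good μ r c K Ns a)
    (f : M → ℝ) (hf : Integrable f μ)
    (cs : ℕ → ℝ) (as : ℕ → M → ℝ)
    (hatoms : ∀ n, IsAtomOn μ r b (as n))
    (hsum : Summable (fun n => |cs n|))
    (htend : Filter.Tendsto (fun N => ∫ x, |f x - ∑ n ∈ Finset.range N, cs n * as n x| ∂μ)
      Filter.atTop (nhds 0)) :
    ∃ (cs' : ℕ → ℝ) (as' : ℕ → M → ℝ),
      (∀ n, IsAtomOn μ r c (as' n)) ∧ Summable (fun n => |cs' n|) ∧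
      Filter.Tendsto (fun N => ∫ x, |f x - ∑ n ∈ Finset.range N, cs' n * as' n x| ∂μ)
        Filter.atTop (nhds 0) ∧ (∑' n, |cs' n|) ≤ K * (∑' n, |cs n|) := by
  classical
  have hK0 : (0:ℝ) < K := lt_of_lt_of_le one_pos hK1
  choose lam A hA hlamK hdecomp using fun n => good_elim x₀ hc (Hdec (as n) (hatoms n))
  have hlam_nonneg : ∀ n, (0:ℝ) ≤ ∑ j, |lam n j| :=
    fun n => Finset.sum_nonneg (fun j _ => abs_nonneg _)
  haveI : NeZero Ns := ⟨hN.ne'⟩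
  set e : ℕ ≃ ℕ × Fin Ns := Nat.divModEquiv Ns with he
  set cs' : ℕ → ℝ := fun k => cs (e k).1 * lam (e k).1 (e k).2 with hcs'
  set as' : ℕ → M → ℝ := fun k => A (e k).1 (e k).2 with has'
  have hlamle : ∀ n j, |lam n j| ≤ K :=
    fun n j => le_trans (Finset.single_le_sum (f := fun j => |lam n j|)
      (fun j _ => abs_nonneg _) (Finset.mem_univ j)) (hlamK n)
  -- summability over the product
  have hFnn : ∀ p : ℕ × Fin Ns, (0:ℝ) ≤ |cs p.1 * lam p.1 p.2| := fun p => abs_nonneg _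
  have hfib : ∀ n : ℕ, Summable (fun j : Fin Ns => |cs n * lam n j|) := fun n => Summable.of_finite
  have htsumfib : ∀ n : ℕ, (∑' j : Fin Ns, |cs n * lam n j|) = |cs n| * ∑ j, |lam n j| := by
    intro n
    rw [tsum_fintype]
    rw [Finset.sum_congr rfl (fun (j : Fin Ns) _ => abs_mul (cs n) (lam n j)), ← Finset.mul_sum]
  have hFsummable : Summable (fun p : ℕ × Fin Ns => |cs p.1 * lam p.1 p.2|) := by
    rw [summable_prod_of_nonneg hFnn]
    refine ⟨hfib, ?_⟩
    refine Summable.of_nonneg_of_le (fun n => tsum_nonneg (fun j => abs_nonneg _))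
      (fun n => ?_) (hsum.mul_left K)
    rw [htsumfib n]
    calc |cs n| * ∑ j, |lam n j| ≤ |cs n| * K :=
          mul_le_mul_of_nonneg_left (hlamK n) (abs_nonneg _)
      _ = K * |cs n| := mul_comm _ _
  have hsum' : Summable (fun k => |cs' k|) := by
    have : (fun k => |cs' k|) = (fun p : ℕ × Fin Ns => |cs p.1 * lam p.1 p.2|) ∘ e := rfl
    rw [this, e.summable_iff]
    exact hFsummable
  -- tsum bound
  have htsum : (∑' k, |cs' k|) ≤ K * (∑' n, |cs n|) := by
    have h1 : (∑' k, |cs' k|) = ∑' p : ℕ × Fin Ns, |cs p.1 * lam p.1 p.2| :=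
      e.tsum_eq (fun p => |cs p.1 * lam p.1 p.2|)
    rw [h1, Summable.tsum_prod' hFsummable hfib]
    calc (∑' n, ∑' j : Fin Ns, |cs n * lam n j|) = ∑' n, |cs n| * ∑ j, |lam n j| := by
          congr 1; funext n; exact htsumfib n
      _ ≤ ∑' n, K * |cs n| := by
          refine Summable.tsum_le_tsum (fun n => ?_) ?_ (hsum.mul_left K)
          · calc |cs n| * ∑ j, |lam n j| ≤ |cs n| * K :=
                mul_le_mul_of_nonneg_left (hlamK n) (abs_nonneg _)
              _ = K * |cs n| := mul_comm _ _
          · refine Summable.of_nonneg_of_le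
              (fun n => mul_nonneg (abs_nonneg _) (hlam_nonneg n)) (fun n => ?_) (hsum.mul_left K)
            calc |cs n| * ∑ j, |lam n j| ≤ |cs n| * K :=
                mul_le_mul_of_nonneg_left (hlamK n) (abs_nonneg _)
              _ = K * |cs n| := mul_comm _ _
      _ = K * ∑' n, |cs n| := tsum_mul_left
  -- index computation
  have hidx : ∀ (q k : ℕ) (hk : k < Ns), e (Ns * q + k) = (q, ⟨k, hk⟩) := by
    intro q k hk
    have h1 : (Ns * q + k) / Ns = q := by
      rw [Nat.mul_add_div hN, Nat.div_eq_of_lt hk, add_zero]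
    have h2 : (Ns * q + k) % Ns = k := by
      rw [Nat.mul_add_mod, Nat.mod_eq_of_lt hk]
    show ((Ns * q + k) / Ns, (⟨(Ns * q + k) % Ns, _⟩ : Fin Ns)) = (q, ⟨k, hk⟩)
    rw [Prod.mk.injEq]
    constructor
    · exact h1
    · exact Fin.ext h2
  -- block identity
  have hblock : ∀ (q : ℕ) (x : M),
      ∑ k ∈ Finset.range (Ns * q), cs' k * as' k x = ∑ n ∈ Finset.range q, cs n * as n x := by
    intro q x
    induction q with
    | zero => simp
    | succ q ih =>
      have h1 : Ns * (q+1) = Ns * q + Ns := by ring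
      rw [h1, Finset.sum_range_add, ih, Finset.sum_range_succ]
      congr 1
      have h3 : ∑ k ∈ Finset.range Ns, cs' (Ns*q+k) * as' (Ns*q+k) x
          = ∑ j : Fin Ns, cs q * (lam q j * A q j x) := by
        rw [← Fin.sum_univ_eq_sum_range (fun k => cs' (Ns*q+k) * as' (Ns*q+k) x) Ns]
        apply Finset.sum_congr rfl
        intro j _
        simp only [hcs', has']
        rw [hidx q j.1 j.2]
        simp only [Fin.eta]
        ring
      rw [h3, ← Finset.mul_sum, ← hdecomp q x]
  refine ⟨cs', as', fun k => hA _ _, hsum', ?_, htsum⟩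
  have hip : ∀ k, Integrable (fun x => cs' k * as' k x) μ := fun k =>
    (atom_integrable (hA (e k).1 (e k).2)).const_mul _
  have hS : ∀ Q, Integrable (fun x => ∑ k ∈ Finset.range Q, cs' k * as' k x) μ :=
    fun Q => integrable_finset_sum _ (fun k _ => hip k)
  have hk1 : ∀ k, (∫ x, |cs' k * as' k x| ∂μ) ≤ |cs' k| := by
    intro k
    have h0 : (∫ x, |cs' k * as' k x| ∂μ) = |cs' k| * ∫ x, |as' k x| ∂μ := by
      rw [← integral_const_mul]
      congr 1
      funext x
      rw [abs_mul]
    rw [h0]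
    calc |cs' k| * ∫ x, |as' k x| ∂μ ≤ |cs' k| * 1 :=
        mul_le_mul_of_nonneg_left (atom_L1 hr1 hfin hbp (hA _ _)) (abs_nonneg _)
      _ = |cs' k| := mul_one _
  have hbound : ∀ Q : ℕ,
      (∫ x, |f x - ∑ k ∈ Finset.range Q, cs' k * as' k x| ∂μ)
        ≤ (∫ x, |f x - ∑ n ∈ Finset.range (Q / Ns), cs n * as n x| ∂μ) + K * |cs (Q / Ns)| := by
    intro Q
    set q := Q / Ns with hq
    have hlow : Ns * q ≤ Q := by
      rw [hq, mul_comm]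
      exact Nat.div_mul_le_self Q Ns
    have hhigh : Q ≤ Ns * (q+1) := by
      have h1 := Nat.div_add_mod Q Ns
      rw [← hq] at h1
      have h2 : Q % Ns < Ns := Nat.mod_lt _ hN
      have h3 : Ns * (q+1) = Ns * q + Ns := by ring
      omega
    have hptw : ∀ x, |f x - ∑ k ∈ Finset.range Q, cs' k * as' k x| ≤
        |f x - ∑ k ∈ Finset.range (Ns*q), cs' k * as' k x| +
        |∑ k ∈ Finset.Ico (Ns*q) Q, cs' k * as' k x| := by
      intro x
      have h1 : ∑ k ∈ Finset.Ico (Ns*q) Q, cs' k * as' k x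
          = ∑ k ∈ Finset.range Q, cs' k * as' k x -
            ∑ k ∈ Finset.range (Ns*q), cs' k * as' k x :=
        Finset.sum_Ico_eq_sub _ hlow
      have h2 : f x - ∑ k ∈ Finset.range Q, cs' k * as' k x
          = (f x - ∑ k ∈ Finset.range (Ns*q), cs' k * as' k x) -
            (∑ k ∈ Finset.Ico (Ns*q) Q, cs' k * as' k x) := by
        rw [h1]; ring
      rw [h2]
      exact abs_sub _ _
    have hIco_int : Integrable (fun x => ∑ k ∈ Finset.Ico (Ns*q) Q, cs' k * as' k x) μ :=
      integrable_finset_sum _ (fun k _ => hip k)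
    have h4 : ∑ k ∈ Finset.range Ns, |cs' (Ns*q + k)| = ∑ j : Fin Ns, |cs q| * |lam q j| := by
      rw [← Fin.sum_univ_eq_sum_range (fun k => |cs' (Ns*q+k)|) Ns]
      apply Finset.sum_congr rfl
      intro j _
      simp only [hcs']
      rw [hidx q j.1 j.2]
      simp [abs_mul]
    calc (∫ x, |f x - ∑ k ∈ Finset.range Q, cs' k * as' k x| ∂μ)
        ≤ ∫ x, (|f x - ∑ k ∈ Finset.range (Ns*q), cs' k * as' k x| +
            |∑ k ∈ Finset.Ico (Ns*q) Q, cs' k * as' k x|) ∂μ :=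
          integral_mono ((hf.sub (hS Q)).abs)
            (((hf.sub (hS (Ns*q))).abs).add hIco_int.abs) hptw
      _ = (∫ x, |f x - ∑ k ∈ Finset.range (Ns*q), cs' k * as' k x| ∂μ) +
          ∫ x, |∑ k ∈ Finset.Ico (Ns*q) Q, cs' k * as' k x| ∂μ :=
          integral_add ((hf.sub (hS (Ns*q))).abs) hIco_int.abs
      _ ≤ (∫ x, |f x - ∑ n ∈ Finset.range q, cs n * as n x| ∂μ) + K * |cs q| := by
          refine add_le_add (le_of_eq ?_) ?_
          · congr 1
            funext x
            rw [hblock q x]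
          · calc (∫ x, |∑ k ∈ Finset.Ico (Ns*q) Q, cs' k * as' k x| ∂μ)
                ≤ ∫ x, ∑ k ∈ Finset.Ico (Ns*q) Q, |cs' k * as' k x| ∂μ :=
                  integral_mono hIco_int.abs
                    (integrable_finset_sum _ (fun k _ => (hip k).abs))
                    (fun x => Finset.abs_sum_le_sum_abs _ _)
              _ = ∑ k ∈ Finset.Ico (Ns*q) Q, ∫ x, |cs' k * as' k x| ∂μ :=
                  integral_finset_sum _ (fun k _ => (hip k).abs)
              _ ≤ ∑ k ∈ Finset.Ico (Ns*q) Q, |cs' k| :=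
                  Finset.sum_le_sum (fun k _ => hk1 k)
              _ ≤ ∑ k ∈ Finset.Ico (Ns*q) (Ns*(q+1)), |cs' k| :=
                  Finset.sum_le_sum_of_subset_of_nonneg
                    (Finset.Ico_subset_Ico le_rfl hhigh)
                    (fun k _ _ => abs_nonneg _)
              _ = ∑ k ∈ Finset.range Ns, |cs' (Ns*q + k)| := by
                  have h5 : Ns*(q+1) - Ns*q = Ns := by
                    have h6 : Ns*(q+1) = Ns*q + Ns := by ring
                    omega
                  rw [Finset.sum_Ico_eq_sum_range, h5]
              _ = |cs q| * ∑ j : Fin Ns, |lam q j| := by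
                  rw [h4, ← Finset.mul_sum]
              _ ≤ |cs q| * K := mul_le_mul_of_nonneg_left (hlamK q) (abs_nonneg _)
              _ = K * |cs q| := mul_comm _ _
  have hqdiv : Filter.Tendsto (fun Q : ℕ => Q / Ns) Filter.atTop Filter.atTop := by
    apply Filter.tendsto_atTop_atTop.2
    intro B
    exact ⟨Ns * B, fun Q hQ => (Nat.le_div_iff_mul_le hN).2 (by rw [Nat.mul_comm]; exact hQ)⟩
  have hg : Filter.Tendsto (fun Q : ℕ =>
      (∫ x, |f x - ∑ n ∈ Finset.range (Q/Ns), cs n * as n x| ∂μ) + K * |cs (Q/Ns)|)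
      Filter.atTop (nhds 0) := by
    have h1 := htend.comp hqdiv
    have h2 := (hsum.tendsto_atTop_zero.comp hqdiv).const_mul K
    have h3 := h1.add h2
    simpa using h3
  exact squeeze_zero (fun Q => integral_nonneg (fun x => abs_nonneg _)) hbound hg

end HSSI

set_option maxHeartbeats 2000000 in
open HSSI in
/-- In an unbounded, locally doubling metric measure space with the
approximate midpoint property (constants `R₀ ≥ 0`, `β ∈ (1/2,1)`), for
`r ∈ (1,∞]` and `R₀/(1−β) < c < b`, the Hardy spaces `H_c^{1,r}(μ)` and
`H_b^{1,r}(μ)` contain the same functions and their norms are equivalent: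
`‖f‖_{H_b} ≤ ‖f‖_{H_c} ≤ C·‖f‖_{H_b}`. -/
theorem hardy_space_scale_invariance
    {M : Type*} [MetricSpace M] [MeasurableSpace M] [BorelSpace M]
    (μ : Measure M)
    (hpos : μ Set.univ ≠ 0)
    (hballs : ∀ (x : M) (r : ℝ), μ (Metric.ball x r) < ⊤)
    (hunb : ¬ Bornology.IsBounded (Set.univ : Set M))
    (hLD : ∀ b : ℝ, 0 < b → ∃ D : ℝ, ∀ (x : M) (s : ℝ), 0 < s → s ≤ b →
      μ (Metric.ball x (2 * s)) ≤ ENNReal.ofReal D * μ (Metric.ball x s))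
    (R₀ β : ℝ) (hR₀ : 0 ≤ R₀) (hβ₁ : 1 / 2 < β) (hβ₂ : β < 1)
    (hAMP : ∀ x y : M, R₀ < dist x y → ∃ (z : M) (s : ℝ),
      s < β * dist x y ∧ x ∈ Metric.ball z s ∧ y ∈ Metric.ball z s)
    (r : ℝ≥0∞) (hr : 1 < r)
    (b c : ℝ) (hc : R₀ / (1 - β) < c) (hcb : c < b) :
    ∃ C : ℝ, 0 < C ∧ ∀ f : M → ℝ, Integrable f μ →
      (InHardy μ r c f ↔ InHardy μ r b f) ∧
      (InHardy μ r c f →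
        hardyNorm μ r b f ≤ hardyNorm μ r c f ∧
        hardyNorm μ r c f ≤ C * hardyNorm μ r b f) := by
  classical
  have hr1 : 1 ≤ r := hr.le
  -- nonemptiness
  rcases isEmpty_or_nonempty M with hM | hM
  · exact absurd (by simp [Set.univ_eq_empty_iff.mpr hM]) hunb
  obtain x₀ : M := Classical.arbitrary M
  -- basic positivity
  have hβ0 : (0:ℝ) < β := by linarith
  have h1β : (0:ℝ) < 1 - β := by linarith
  have hR0c : R₀ < c := by
    have h1 : R₀ ≤ R₀ / (1 - β) := by
      rw [le_div_iff₀ h1β]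
      nlinarith
    linarith
  have hc0 : (0:ℝ) < c := lt_of_le_of_lt (le_trans hR₀ (by
      have : R₀ ≤ R₀ / (1 - β) := by
        rw [le_div_iff₀ h1β]; nlinarith
      linarith : R₀ ≤ R₀ / (1-β))) hc
  have hb0 : (0:ℝ) < b := lt_trans hc0 hcb
  set δ : ℝ := (c - R₀)/2 with hδdef
  set τ : ℝ := (c + R₀)/2 with hτdef
  have hδ : 0 < δ := by rw [hδdef]; linarith
  have hτ : 0 < τ := by rw [hτdef]; positivity
  have hτδc : τ + δ = c := by rw [hδdef, hτdef]; ring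
  have hR₀τ : R₀ ≤ τ := by rw [hτdef]; linarith
  have hδc : δ ≤ c := by linarith
  -- derived measure facts
  have hbp : ∀ (x : M) (s : ℝ), 0 < s → 0 < μ (Metric.ball x s) := ball_pos μ hpos hLD
  have hfin : ∀ (x : M) (s : ℝ), μ (Metric.ball x s) < ⊤ := fun x s => hballs x s
  -- doubling constants
  obtain ⟨M₁, hM₁⟩ := pow_unbounded_of_one_lt (4*(b+c)/(δ/2)) (by norm_num : (1:ℝ) < 2)
  have hM₁' : 4*(b+c) ≤ 2^M₁ * (δ/2) := by
    rw [div_lt_iff₀ (by positivity)] at hM₁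
    nlinarith
  set T₂ : ℝ := 2^M₁ * (b+c+δ+1) with hT₂def
  have hT₂pos : 0 < T₂ := by rw [hT₂def]; positivity
  obtain ⟨D, hD⟩ := hLD T₂ hT₂pos
  set CE : ℝ≥0∞ := (ENNReal.ofReal (max D 1))^M₁ with hCEdef
  have hCE1 : 1 ≤ CE := by
    rw [hCEdef]
    refine one_le_pow₀ ?_
    rw [show (1:ℝ≥0∞) = ENNReal.ofReal 1 by simp]
    exact ENNReal.ofReal_le_ofReal (le_max_right D 1)
  have hCEt : CE ≠ ⊤ := by
    rw [hCEdef]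
    exact ENNReal.pow_ne_top ENNReal.ofReal_ne_top
  -- master comparison
  have Hcmp2 : ∀ (p q : M) (s s' : ℝ), δ/2 ≤ s → s ≤ b + c → 0 < s' →
      dist p q + s' ≤ 4*(b+c) → μ (Metric.ball p s') ≤ CE * μ (Metric.ball q s) := by
    intro p q s s' hs1 hs2 hs'0 hwin
    have hs0 : 0 < s := lt_of_lt_of_le (by positivity) hs1
    have h1 : Metric.ball p s' ⊆ Metric.ball q (s' + dist p q) :=
      Metric.ball_subset_ball' le_rfl
    have h2 : s' + dist p q ≤ 2^M₁ * s := by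
      have := le_trans hM₁' (by nlinarith [hs1] : 2^M₁ * (δ/2) ≤ 2^M₁ * s)
      have hd0 : 0 ≤ dist p q := dist_nonneg
      linarith
    have h3 := doubling_chain μ D T₂ hD M₁ q s hs0 (fun k hk => by
      have hk2 : (2:ℝ)^k ≤ 2^M₁ := pow_le_pow_right₀ (by norm_num) hk.le
      have : (2:ℝ)^k * s ≤ 2^M₁ * s := by nlinarith
      rw [hT₂def]
      nlinarith)
    calc μ (Metric.ball p s') ≤ μ (Metric.ball q (2^M₁ * s)) :=
          measure_mono (le_trans h1 (Metric.ball_subset_ball h2) : Metric.ball p s' ⊆ _)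
      _ ≤ (ENNReal.ofReal D)^M₁ * μ (Metric.ball q s) := h3
      _ ≤ CE * μ (Metric.ball q s) := by
          rw [hCEdef]
          exact mul_le_mul_left (pow_le_pow_left' (ENNReal.ofReal_le_ofReal (le_max_left D 1)) M₁) _
  -- specific comparison instances
  have HcmpA : ∀ p q : M, dist p q ≤ τ → μ (Metric.ball p c) ≤ CE * μ (Metric.ball q δ) := by
    intro p q hd
    refine Hcmp2 p q δ c (by linarith) (by linarith) hc0 ?_
    have hτc : τ ≤ c := by rw [hτdef]; linarith
    linarith
  have Hc1 : ∀ (x' p : M) (s : ℝ), c < s → s ≤ b → p ∈ Metric.ball x' s →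
      μ (Metric.ball p c) ≤ CE * μ (Metric.ball x' s) := by
    intro x p s hcs hsb hp
    refine Hcmp2 p x s c (by linarith) (by linarith) hc0 ?_
    have h1 := Metric.mem_ball.1 hp
    linarith
  have Hc2 : ∀ (x p : M) (s : ℝ), c < s → s ≤ b → p ∈ Metric.ball x s →
      μ (Metric.ball x s) ≤ CE * μ (Metric.ball p c) := by
    intro x p s hcs hsb hp
    refine Hcmp2 x p c s (by linarith) (by linarith) (by linarith) ?_
    have h2 : dist x p < s := by rw [dist_comm]; exact Metric.mem_ball.1 hp
    linarith
  have Hc3 : ∀ p : M, μ (Metric.ball p c) ≤ CE * μ (Metric.ball p δ) := by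
    intro p
    refine Hcmp2 p p δ c (by linarith) (by linarith) hc0 ?_
    rw [dist_self]
    linarith
  have Hnetcmp : ∀ (x p : M) (s : ℝ), 0 < s → s ≤ b → p ∈ Metric.ball x s →
      μ (Metric.ball x (2*s)) ≤ CE * μ (Metric.ball p (δ/2)) := by
    intro x p s hs hsb hp
    refine Hcmp2 x p (δ/2) (2*s) le_rfl (by linarith) (by linarith) ?_
    have h2 : dist x p < s := by rw [dist_comm]; exact Metric.mem_ball.1 hp
    linarith
  -- chain length
  obtain ⟨k₁, hk₁⟩ := exists_pow_lt_of_lt_one (show (0:ℝ) < τ/(2*b) by positivity) hβ₂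
  have hk₁' : 2*b ≤ τ / β^k₁ := by
    have hβk : (0:ℝ) < β^k₁ := by positivity
    rw [lt_div_iff₀ (by positivity : (0:ℝ) < 2*b)] at hk₁
    rw [le_div_iff₀ hβk]
    nlinarith
  have Hbump : ∀ x y : M, dist x y ≤ 2*b →
      Good μ r c ((2*CE.toReal) * 2^k₁) (2^k₁) (fun w => bump μ δ x w - bump μ δ y w) :=
    fun x y hd => bump_good μ hfin hbp δ τ hδ hτ hτδc R₀ β hR₀τ hβ0 hβ₂ hAMP CE hCE1 hCEt
      HcmpA k₁ x y (le_trans hd hk₁')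
  set KA : ℝ := (2*CE.toReal) * 2^k₁ with hKAdef
  have hKA0 : 0 ≤ KA := by rw [hKAdef]; positivity
  set N₀ : ℕ := Nat.ceil (CE.toReal) with hN₀def
  have hN₀ : CE.toReal ≤ (N₀:ℝ) := Nat.le_ceil _
  have Hnet := net μ hδ hfin hbp CE hCEt Hnetcmp N₀ hN₀
  set Ktot : ℝ := 1 + (N₀:ℝ) * (2 * CE^2).toReal + KA with hKtotdef
  set Ntot : ℕ := N₀ * (2^k₁ + 1) + 1 with hNtotdef
  have Hdec : ∀ a : M → ℝ, IsAtomOn μ r b a → Good μ r c Ktot Ntot a :=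
    fun a ha => atom_split μ hr1 hfin hbp δ hδ hδc hc0 hcb CE hCE1 hCEt Hc1 Hc2 Hc3
      KA (2^k₁) hKA0 Hbump N₀ Hnet ha
  have hKtot1 : 1 ≤ Ktot := by
    have hx : (0:ℝ) ≤ (N₀:ℝ) * (2 * CE^2).toReal := by positivity
    rw [hKtotdef]
    linarith
  have hNtot : 0 < Ntot := Nat.succ_pos _
  have hKtot0 : 0 < Ktot := lt_of_lt_of_le one_pos hKtot1
  have Htrans : ∀ f : M → ℝ, Integrable f μ → ∀ (cs : ℕ → ℝ) (as : ℕ → M → ℝ),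
      (∀ n, IsAtomOn μ r b (as n)) → Summable (fun n => |cs n|) →
      Filter.Tendsto (fun N => ∫ x, |f x - ∑ n ∈ Finset.range N, cs n * as n x| ∂μ)
        Filter.atTop (nhds 0) →
      ∃ (cs' : ℕ → ℝ) (as' : ℕ → M → ℝ),
        (∀ n, IsAtomOn μ r c (as' n)) ∧ Summable (fun n => |cs' n|) ∧
        Filter.Tendsto (fun N => ∫ x, |f x - ∑ n ∈ Finset.range N, cs' n * as' n x| ∂μ)
          Filter.atTop (nhds 0) ∧ (∑' n, |cs' n|) ≤ Ktot * (∑' n, |cs n|) :=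
    fun f hf cs as h1 h2 h3 =>
      hardy_transfer μ hr1 hc0 x₀ hfin hbp Ktot hKtot1 Ntot hNtot Hdec f hf cs as h1 h2 h3
  refine ⟨Ktot, hKtot0, fun f hf => ?_⟩
  set Sb : Set ℝ := {t : ℝ | ∃ (c0 : ℕ → ℝ) (a0 : ℕ → M → ℝ),
    (∀ n, IsAtomOn μ r b (a0 n)) ∧ Summable (fun n => |c0 n|) ∧
    Filter.Tendsto (fun N => ∫ x, |f x - ∑ n ∈ Finset.range N, c0 n * a0 n x| ∂μ)
      Filter.atTop (nhds 0) ∧ (∑' n, |c0 n|) = t} with hSbdef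
  set Sc : Set ℝ := {t : ℝ | ∃ (c0 : ℕ → ℝ) (a0 : ℕ → M → ℝ),
    (∀ n, IsAtomOn μ r c (a0 n)) ∧ Summable (fun n => |c0 n|) ∧
    Filter.Tendsto (fun N => ∫ x, |f x - ∑ n ∈ Finset.range N, c0 n * a0 n x| ∂μ)
      Filter.atTop (nhds 0) ∧ (∑' n, |c0 n|) = t} with hScdef
  have hNormb : hardyNorm μ r b f = sInf Sb := rfl
  have hNormc : hardyNorm μ r c f = sInf Sc := rfl
  have hbddb : BddBelow Sb := by
    refine ⟨0, fun t ht => ?_⟩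
    obtain ⟨cs0, as0, _, _, _, h⟩ := ht
    rw [← h]
    exact tsum_nonneg (fun n => abs_nonneg _)
  have hbddc : BddBelow Sc := by
    refine ⟨0, fun t ht => ?_⟩
    obtain ⟨cs0, as0, _, _, _, h⟩ := ht
    rw [← h]
    exact tsum_nonneg (fun n => abs_nonneg _)
  constructor
  · constructor
    · rintro ⟨cs, as, h1, h2, h3⟩
      exact ⟨cs, as, fun n => isAtomOn_scale_mono hcb.le (h1 n), h2, h3⟩
    · rintro ⟨cs, as, h1, h2, h3⟩
      obtain ⟨cs', as', g1, g2, g3, _⟩ := Htrans f hf cs as h1 h2 h3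
      exact ⟨cs', as', g1, g2, g3⟩
  · intro hInc
    obtain ⟨cs, as, h1, h2, h3⟩ := hInc
    have hSbne : Sb.Nonempty :=
      ⟨∑' n, |cs n|, cs, as, fun n => isAtomOn_scale_mono hcb.le (h1 n), h2, h3, rfl⟩
    have hScne : Sc.Nonempty := ⟨∑' n, |cs n|, cs, as, h1, h2, h3, rfl⟩
    constructor
    · rw [hNormb, hNormc]
      refine csInf_le_csInf hbddb hScne ?_
      rintro t ⟨cs0, as0, g1, g2, g3, g4⟩
      exact ⟨cs0, as0, fun n => isAtomOn_scale_mono hcb.le (g1 n), g2, g3, g4⟩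
    · have key : ∀ t ∈ Sb, hardyNorm μ r c f ≤ Ktot * t := by
        rintro t ⟨cs0, as0, g1, g2, g3, g4⟩
        obtain ⟨cs', as', k1, k2, k3, k4⟩ := Htrans f hf cs0 as0 g1 g2 g3
        have hmem : (∑' n, |cs' n|) ∈ Sc := ⟨cs', as', k1, k2, k3, rfl⟩
        calc hardyNorm μ r c f ≤ ∑' n, |cs' n| := by
              rw [hNormc]; exact csInf_le hbddc hmem
          _ ≤ Ktot * (∑' n, |cs0 n|) := k4
          _ = Ktot * t := by rw [g4]
      have h2' : hardyNorm μ r c f / Ktot ≤ hardyNorm μ r b f := by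
        rw [hNormb]
        refine le_csInf hSbne (fun t ht => ?_)
        rw [div_le_iff₀ hKtot0]
        calc hardyNorm μ r c f ≤ Ktot * t := key t ht
          _ = t * Ktot := mul_comm _ _
      have h3' := (div_le_iff₀ hKtot0).1 h2'
      calc hardyNorm μ r c f ≤ hardyNorm μ r b f * Ktot := h3'
        _ = Ktot * hardyNorm μ r b f := mul_comm _ _
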